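/- Let μ be a Borel probability measure with compact metrizable support K in a locally convex Hausdorff space E, with discrete part μ_d = Σᵢ aᵢ δ_{xᵢ} where all xᵢ ≠ 0. Replace each point mass δ_{xᵢ} by the uniform distribution on the segment [½xᵢ, ³⁄₂xᵢ] = {t xᵢ : t ∈ [½, ³⁄₂]}. Then the resulting measure μ̃ is non-atomic, is concentrated on the compact metrizable set {t x : t ∈ [½,³⁄₂], x ∈ K} ∪ support(μ − μ_d), and any barycenter of μ̃ is also a barycenter of μ. -/

import Mathlib

open MeasureTheory Set ENNReal

section Aux
open TopologicalSpace Set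

theorem aux_metrizable {X Y : Type*} [TopologicalSpace X] [TopologicalSpace Y]
    [CompactSpace X] [TopologicalSpace.MetrizableSpace X] [T2Space Y]
    {f : X → Y} (hf : Continuous f) (hsurj : Function.Surjective f) :
    TopologicalSpace.MetrizableSpace Y := by
  letI := TopologicalSpace.metrizableSpaceMetric X
  haveI : CompactSpace Y := ⟨by rw [← hsurj.range_eq]; exact isCompact_range hf⟩
  haveI : SecondCountableTopology Y := by
    have hclosed : IsClosedMap f := hf.isClosedMap
    have hBbasis := isBasis_countableBasis X
    set B : Set (Set X) := countableBasis X with hB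
    set C : Set (Set Y) := (fun U => (f '' Uᶜ)ᶜ) '' {U | ∃ T : Set (Set X), T ⊆ B ∧ T.Finite ∧ U = ⋃₀ T} with hC
    have hCc : C.Countable := by
      apply Set.Countable.image
      have h1 : {T : Set (Set X) | T.Finite ∧ T ⊆ B}.Countable :=
        countable_setOf_finite_subset (countable_countableBasis X)
      refine (h1.image (fun T => ⋃₀ T)).mono ?_
      rintro U ⟨T, hTB, hTf, rfl⟩
      exact ⟨T, ⟨hTf, hTB⟩, rfl⟩
    refine (TopologicalSpace.isTopologicalBasis_of_isOpen_of_nhds ?_ ?_).secondCountableTopology hCc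
    · rintro u ⟨U, ⟨T, hTB, hTf, rfl⟩, rfl⟩
      exact (hclosed _ (isOpen_sUnion fun t ht => hBbasis.isOpen (hTB ht)).isClosed_compl).isOpen_compl
    · intro y V hyV hV
      have hfib : IsCompact (f ⁻¹' {y}) := (isClosed_singleton.preimage hf).isCompact
      have hVo : IsOpen (f ⁻¹' V) := hV.preimage hf
      have hcover : f ⁻¹' {y} ⊆ ⋃ b : {b : Set X // b ∈ B ∧ b ⊆ f ⁻¹' V}, (b : Set X) := by
        intro z hz
        simp only [mem_preimage, mem_singleton_iff] at hz
        have hzV : z ∈ f ⁻¹' V := by simp only [mem_preimage, hz]; exact hyV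
        obtain ⟨b, hbB, hzb, hbV⟩ := hBbasis.exists_subset_of_mem_open hzV hVo
        exact Set.mem_iUnion.2 ⟨⟨b, hbB, hbV⟩, hzb⟩
      obtain ⟨t, ht⟩ := hfib.elim_finite_subcover
        (fun b : {b : Set X // b ∈ B ∧ b ⊆ f ⁻¹' V} => (b : Set X))
        (fun b => hBbasis.isOpen b.2.1) hcover
      set T : Set (Set X) := Subtype.val '' (↑t : Set {b : Set X // b ∈ B ∧ b ⊆ f ⁻¹' V}) with hT
      set U : Set X := ⋃₀ T with hU
      have hUV : U ⊆ f ⁻¹' V := by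
        rintro z hz
        obtain ⟨u, ⟨b, hbt, rfl⟩, hzu⟩ := hz
        exact b.2.2 hzu
      have hfibU : f ⁻¹' {y} ⊆ U := by
        intro z hz
        obtain ⟨b, hbt, hzb⟩ := Set.mem_iUnion₂.1 (ht hz)
        exact ⟨b, ⟨b, hbt, rfl⟩, hzb⟩
      refine ⟨(f '' Uᶜ)ᶜ, ⟨U, ⟨T, ?_, ?_, rfl⟩, rfl⟩, ?_, ?_⟩
      · rintro u ⟨b, hbt, rfl⟩; exact b.2.1
      · exact (t.finite_toSet).image _
      · intro hy
        obtain ⟨z, hz, hzy⟩ := hy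
        exact hz (hfibU (by simp [hzy]))
      · intro w hw
        obtain ⟨z, rfl⟩ := hsurj w
        by_cases hzU : z ∈ U
        · exact hUV hzU
        · exact absurd ⟨z, hzU, rfl⟩ hw
  haveI : T3Space Y := inferInstance
  infer_instance

end Aux

variable {E : Type*} [AddCommGroup E] [Module ℝ E] [TopologicalSpace E]
  [IsTopologicalAddGroup E] [ContinuousSMul ℝ E] [LocallyConvexSpace ℝ E] [T2Space E]
  [MeasurableSpace E] [BorelSpace E]

def IsBarycenter (μ : Measure E) (r : E) : Prop :=
  ∀ e' : E →L[ℝ] ℝ, Integrable (fun y => e' y) μ ∧ e' r = ∫ y, e' y ∂μ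

theorem stmt9 (μ : Measure E) [IsProbabilityMeasure μ]
    (K : Set E) (hK : IsCompact K) (hKm : TopologicalSpace.MetrizableSpace K)
    (hconc : μ Kᶜ = 0)
    (a : ℕ → ℝ≥0∞) (x : ℕ → E) (hx : ∀ i, x i ≠ 0)
    (μd : Measure E) (hμd : μd = Measure.sum fun i => a i • Measure.dirac (x i))
    (hle : μd ≤ μ) (hdiscrete : ∀ y : E, (μ - μd) {y} = 0) :
    let μt : Measure E := (μ - μd) +
      Measure.sum fun i =>
        a i • Measure.map (fun t : ℝ => t • x i) (volume.restrict (Icc (1/2:ℝ) (3/2)))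
    let S : Set E := ((fun p : ℝ × E => p.1 • p.2) '' ((Icc (1/2:ℝ) (3/2)) ×ˢ K)) ∪ K
    (∀ y : E, μt {y} = 0) ∧ μt Sᶜ = 0 ∧
      IsCompact S ∧ TopologicalSpace.MetrizableSpace S ∧
      ∀ r : E, IsBarycenter μt r → IsBarycenter μ r := by
  intro μt S
  haveI : IsFiniteMeasure μd :=
    ⟨(Measure.le_iff'.1 hle Set.univ).trans_lt (measure_lt_top μ Set.univ)⟩
  have hmeas : ∀ i, Measurable (fun t : ℝ => t • x i) := fun i =>
    (continuous_id.smul continuous_const).measurable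
  have hScompact : IsCompact S :=
    (((isCompact_Icc.prod hK).image (continuous_fst.smul continuous_snd))).union hK
  have hSc_meas : MeasurableSet Sᶜ := hScompact.isClosed.measurableSet.compl
  have hxK : ∀ i, a i ≠ 0 → x i ∈ K := by
    intro i hai
    by_contra hxi
    have h0 : μ {x i} = 0 :=
      measure_mono_null (by simpa [Set.singleton_subset_iff] using hxi) hconc
    have h2 : μd {x i} ≤ μ {x i} := Measure.le_iff'.1 hle _
    have h3 : (a i • Measure.dirac (x i)) {x i} ≤ μd {x i} := by
      rw [hμd]
      exact Measure.le_iff'.1 (Measure.le_sum (fun j => a j • Measure.dirac (x j)) i) _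
    rw [h0] at h2
    simp only [Measure.smul_apply, Measure.dirac_apply_of_mem (Set.mem_singleton _),
      smul_eq_mul, mul_one] at h3
    exact hai (le_antisymm (h3.trans h2) zero_le)
  refine ⟨?_, ?_, hScompact, ?_, ?_⟩
  · -- atomless
    intro y
    have h1 : (μ - μd) {y} = 0 := hdiscrete y
    have hmap : ∀ i,
        (Measure.map (fun t : ℝ => t • x i) (volume.restrict (Icc (1/2:ℝ) (3/2)))) {y} = 0 := by
      intro i
      rw [Measure.map_apply (hmeas i) (measurableSet_singleton y)]
      have hsub : ((fun t : ℝ => t • x i) ⁻¹' {y}).Subsingleton := by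
        intro s hs t ht
        simp only [Set.mem_preimage, Set.mem_singleton_iff] at hs ht
        exact smul_left_injective ℝ (hx i) (hs.trans ht.symm)
      exact hsub.measure_zero _
    show ((μ - μd) + _) {y} = 0
    rw [Measure.add_apply, h1, zero_add, Measure.sum_apply _ (measurableSet_singleton y)]
    simp only [Measure.smul_apply, hmap, smul_zero, tsum_zero]
  · -- concentrated on S
    have h1 : (μ - μd) Sᶜ = 0 := by
      refine le_antisymm ?_ zero_le
      calc (μ - μd) Sᶜ ≤ μ Sᶜ := Measure.le_iff'.1 Measure.sub_le _
        _ ≤ μ Kᶜ := measure_mono (Set.compl_subset_compl.2 Set.subset_union_right)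
        _ = 0 := hconc
    have hmapS : ∀ i,
        (a i • Measure.map (fun t : ℝ => t • x i) (volume.restrict (Icc (1/2:ℝ) (3/2)))) Sᶜ
          = 0 := by
      intro i
      rcases eq_or_ne (a i) 0 with h | h
      · simp [h]
      · rw [Measure.smul_apply, Measure.map_apply (hmeas i) hSc_meas,
          Measure.restrict_apply ((hmeas i) hSc_meas)]
        have hemp : (fun t : ℝ => t • x i) ⁻¹' Sᶜ ∩ Icc (1/2:ℝ) (3/2) = ∅ := by
          ext t
          simp only [Set.mem_inter_iff, Set.mem_preimage, Set.mem_compl_iff,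
            Set.mem_empty_iff_false, iff_false, not_and]
          intro hts hti
          exact (hts (Or.inl ⟨(t, x i), ⟨hti, hxK i h⟩, rfl⟩)).elim
        rw [hemp, measure_empty, smul_zero]
    show ((μ - μd) + _) Sᶜ = 0
    rw [Measure.add_apply, h1, zero_add, Measure.sum_apply _ hSc_meas]
    simp only [hmapS, tsum_zero]
  · -- metrizable
    haveI : CompactSpace K := isCompact_iff_compactSpace.mp hK
    haveI : CompactSpace (Icc (1/2:ℝ) (3/2)) := isCompact_iff_compactSpace.mp isCompact_Icc
    haveI := hKm
    let f : (↥(Icc (1/2:ℝ) (3/2)) × ↥K) → ↥S := fun p =>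
      ⟨(p.1 : ℝ) • (p.2 : E), Or.inl ⟨((p.1 : ℝ), (p.2 : E)), ⟨p.1.2, p.2.2⟩, rfl⟩⟩
    have hfc : Continuous f :=
      Continuous.subtype_mk
        ((continuous_subtype_val.comp continuous_fst).smul
          (continuous_subtype_val.comp continuous_snd)) _
    have hfs : Function.Surjective f := by
      rintro ⟨s, hs⟩
      rcases hs with ⟨⟨t, z⟩, ⟨ht, hz⟩, rfl⟩ | hsK
      · exact ⟨(⟨t, ht⟩, ⟨z, hz⟩), rfl⟩
      · refine ⟨(⟨1, by norm_num⟩, ⟨s, hsK⟩), Subtype.ext ?_⟩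
        exact one_smul ℝ s
    exact aux_metrizable hfc hfs
  · -- barycenter
    intro r hr e'
    have hIt : Integrable (fun y => e' y) μt := (hr e').1
    have hEt : e' r = ∫ y, e' y ∂μt := (hr e').2
    obtain ⟨Cb, hCb⟩ := hK.exists_bound_of_continuousOn e'.continuous.continuousOn
    have haeK : ∀ᵐ y ∂μ, y ∈ K := by
      rw [ae_iff]
      exact measure_mono_null (fun y hy => hy) hconc
    have hIμ : Integrable (fun y => e' y) μ := by
      refine Integrable.mono' (integrable_const Cb) e'.continuous.aestronglyMeasurable ?_
      exact haeK.mono fun y hy => hCb y hy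
    refine ⟨hIμ, ?_⟩
    have hId : Integrable (fun y => e' y) μd := hIμ.mono_measure hle
    have hIsub : Integrable (fun y => e' y) (μ - μd) := hIμ.mono_measure Measure.sub_le
    have hIsum : Integrable (fun y => e' y)
        (Measure.sum fun i =>
          a i • Measure.map (fun t : ℝ => t • x i) (volume.restrict (Icc (1/2:ℝ) (3/2)))) :=
      hIt.mono_measure (Measure.le_add_left le_rfl)
    have hIcc : ∫ t in Icc (1/2:ℝ) (3/2), t = 1 := by
      rw [MeasureTheory.integral_Icc_eq_integral_Ioc,
        ← _root_.intervalIntegral.integral_of_le (by norm_num : (1/2:ℝ) ≤ 3/2)]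
      rw [_root_.integral_id]
      norm_num
    have hterm : ∀ i, ∫ y, e' y
        ∂(a i • Measure.map (fun t : ℝ => t • x i) (volume.restrict (Icc (1/2:ℝ) (3/2))))
        = (a i).toReal * e' (x i) := by
      intro i
      rw [integral_smul_measure,
        integral_map (hmeas i).aemeasurable e'.continuous.aestronglyMeasurable]
      have : (fun t : ℝ => e' (t • x i)) = fun t : ℝ => t * e' (x i) := by
        funext t
        rw [e'.map_smul, smul_eq_mul]
      rw [this, integral_mul_const, hIcc, one_mul, smul_eq_mul]
    have hterm' : ∀ i, ∫ y, e' y ∂(a i • Measure.dirac (x i)) = (a i).toReal * e' (x i) := by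
      intro i
      rw [integral_smul_measure, integral_dirac, smul_eq_mul]
    have hμt_int : ∫ y, e' y ∂μt
        = (∫ y, e' y ∂(μ - μd)) + ∑' i, (a i).toReal * e' (x i) := by
      show ∫ y, e' y ∂((μ - μd) + _) = _
      rw [integral_add_measure hIsub hIsum, integral_sum_measure hIsum]
      exact congrArg _ (tsum_congr hterm)
    have hμ_int : ∫ y, e' y ∂μ
        = (∫ y, e' y ∂(μ - μd)) + ∑' i, (a i).toReal * e' (x i) := by
      conv_lhs => rw [← Measure.sub_add_cancel_of_le hle]
      rw [integral_add_measure hIsub hId]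
      congr 1
      rw [hμd] at hId
      rw [hμd, integral_sum_measure hId]
      exact tsum_congr hterm'
    rw [hμ_int, hEt, hμt_int]
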